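/- Let Γ be a finite group acting by isometries on S³ × ℝ such that all fixed points of nontrivial elements are isolated and all of them lie in S³ × {0}. Suppose γ ∈ Γ has a fixed point z = (o, 0). Then the stabilizer Γ_z of z has order at most 2, and any nontrivial element of Γ_z acts on the ℝ factor by s ↦ -s. -/

import Mathlib

/-- The metric space `S³ × ℝ` with the standard product metric. -/
abbrev S3xR : Type := (Metric.sphere (0 : EuclideanSpace ℝ (Fin 4)) 1) × ℝ

noncomputable section
namespace StabAux

abbrev E4 := EuclideanSpace ℝ (Fin 4)
abbrev Sph := Metric.sphere (0 : E4) 1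

def bp (i : Fin 4) : Sph := ⟨EuclideanSpace.single i 1, by
  simp [mem_sphere_zero_iff_norm, EuclideanSpace.norm_single]⟩

open Matrix
variable (g : S3xR ≃ᵢ S3xR)

/-- slice map -/
def fs (s : ℝ) (x : Sph) : Sph := (g (x, s)).1

lemma fs_spec (h2 : ∀ p : S3xR, (g p).2 = p.2) (s : ℝ) (x : Sph) : g (x, s) = (fs g s x, s) := by
  have := h2 (x, s)
  exact Prod.ext rfl this

lemma fs_dist (h2 : ∀ p : S3xR, (g p).2 = p.2) (s : ℝ) (x y : Sph) : dist (fs g s x) (fs g s y) = dist x y := by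
  have := g.dist_eq (x, s) (y, s)
  rw [fs_spec g h2, fs_spec g h2, Prod.dist_eq, Prod.dist_eq] at this
  simp only [] at this
  have hle : (0:ℝ) ≤ dist (fs g s x) (fs g s y) := dist_nonneg
  have hle2 : (0:ℝ) ≤ dist x y := dist_nonneg
  simp only [dist_self] at this
  rw [max_eq_left hle, max_eq_left hle2] at this
  exact this

lemma fs_surj (h2 : ∀ p : S3xR, (g p).2 = p.2) (s : ℝ) (y : Sph) : ∃ x, fs g s x = y := by
  refine ⟨(g.symm (y, s)).1, ?_⟩
  have hsnd : (g.symm (y, s)).2 = s := by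
    have := h2 (g.symm (y, s))
    rw [g.apply_symm_apply] at this
    exact this.symm
  have : ((g.symm (y, s)).1, s) = g.symm (y, s) := Prod.ext rfl hsnd.symm
  rw [fs, this, g.apply_symm_apply]

lemma sph_norm (x : Sph) : ‖(x : E4)‖ = 1 := by
  have := x.2; rwa [mem_sphere_zero_iff_norm] at this

lemma fs_inner (h2 : ∀ p : S3xR, (g p).2 = p.2) (s : ℝ) (x y : Sph) :
    (inner ℝ (fs g s x : E4) (fs g s y : E4) : ℝ) = inner ℝ (x : E4) (y : E4) := by
  have hd := fs_dist g h2 s x y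
  rw [Subtype.dist_eq, Subtype.dist_eq, dist_eq_norm, dist_eq_norm] at hd
  have e1 : ‖(fs g s x : E4) - (fs g s y : E4)‖ ^ 2 = ‖(x : E4) - (y : E4)‖ ^ 2 := by
    rw [hd]
  rw [norm_sub_sq_real, norm_sub_sq_real, sph_norm, sph_norm, sph_norm, sph_norm] at e1
  linarith

/-- slice matrix -/
def Ms (s : ℝ) : Matrix (Fin 4) (Fin 4) ℝ :=
  Matrix.of fun i j => (fs g s (bp j) : E4) i

lemma inner_eq_sum (x y : E4) : (inner ℝ x y : ℝ) = ∑ i, x i * y i := by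
  rw [PiLp.inner_apply]; exact Finset.sum_congr rfl fun i _ => by simp [mul_comm]

lemma inner_single_right' (x : E4) (i : Fin 4) :
    (inner ℝ x (EuclideanSpace.single i (1:ℝ)) : ℝ) = x i := by
  rw [inner_eq_sum]
  simp [EuclideanSpace.single_apply]

lemma Ms_orth (h2 : ∀ p : S3xR, (g p).2 = p.2) (s : ℝ) : (Ms g s)ᵀ * (Ms g s) = 1 := by
  ext j k
  rw [Matrix.mul_apply]
  have : ∑ i, (Ms g s)ᵀ j i * (Ms g s) i k
      = ∑ i, (fs g s (bp j) : E4) i * (fs g s (bp k) : E4) i := by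
    apply Finset.sum_congr rfl; intro i _; rfl
  rw [this, ← inner_eq_sum, fs_inner g h2]
  rcases eq_or_ne j k with h | h
  · subst h
    rw [inner_eq_sum]
    simp [bp, EuclideanSpace.single_apply, Matrix.one_apply]
  · rw [inner_eq_sum]
    simp [bp, EuclideanSpace.single_apply, Matrix.one_apply, h, Finset.sum_ite_eq]
    intro hc; exact absurd hc.symm h

lemma Ms_agree (h2 : ∀ p : S3xR, (g p).2 = p.2) (s : ℝ) (x : Sph) :
    (Ms g s).mulVec (fun i => (x : E4) i) = fun i => (fs g s x : E4) i := by
  funext i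
  obtain ⟨y, hy⟩ := fs_surj g h2 s (bp i)
  have hyc : (fs g s y : E4) = EuclideanSpace.single i (1:ℝ) := by
    rw [hy]; rfl
  have lhs : (Ms g s).mulVec (fun i => (x : E4) i) i
      = ∑ j, (fs g s (bp j) : E4) i * (x : E4) j := by
    rw [Matrix.mulVec, dotProduct]
    apply Finset.sum_congr rfl; intro j _; rfl
  have key : ∀ j, (fs g s (bp j) : E4) i = (y : E4) j := by
    intro j
    have : (fs g s (bp j) : E4) i = (inner ℝ (fs g s (bp j) : E4) (fs g s y : E4) : ℝ) := by
      rw [hyc, inner_single_right']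
    rw [this, fs_inner g h2]
    rw [bp]
    have : (inner ℝ (EuclideanSpace.single j (1:ℝ)) (y : E4) : ℝ) = (y : E4) j := by
      rw [real_inner_comm, inner_single_right']
    exact this
  have rhs : (fs g s x : E4) i = (inner ℝ (x : E4) (y : E4) : ℝ) := by
    have : (fs g s x : E4) i = (inner ℝ (fs g s x : E4) (fs g s y : E4) : ℝ) := by
      rw [hyc, inner_single_right']
    rw [this, fs_inner g h2]
  rw [lhs, rhs, inner_eq_sum]
  apply Finset.sum_congr rfl; intro j _; rw [key j]; ring


/-- orthogonal matrix with det -1 has a nonzero fixed vector -/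
lemma fixed_of_det_neg_one (A : Matrix (Fin 4) (Fin 4) ℝ)
    (hO : Aᵀ * A = 1) (hd : A.det = -1) :
    ∃ v : Fin 4 → ℝ, v ≠ 0 ∧ A.mulVec v = v := by
  have hO' : A * Aᵀ = 1 := mul_eq_one_comm.mp hO
  have key : A * (Aᵀ - 1) = 1 - A := by
    rw [Matrix.mul_sub, hO', Matrix.mul_one]
  have hdet : A.det * (A - 1).det = (A - 1).det := by
    have h1 : (Aᵀ - 1).det = (A - 1).det := by
      rw [show Aᵀ - 1 = (A - 1)ᵀ by rw [Matrix.transpose_sub, Matrix.transpose_one],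
        Matrix.det_transpose]
    have h2 : (1 - A).det = (A - 1).det := by
      rw [show (1 : Matrix (Fin 4) (Fin 4) ℝ) - A = -(A - 1) from (neg_sub A 1).symm,
        Matrix.det_neg]
      norm_num
    calc A.det * (A - 1).det = A.det * (Aᵀ - 1).det := by rw [h1]
    _ = (A * (Aᵀ - 1)).det := (Matrix.det_mul _ _).symm
    _ = (1 - A).det := by rw [key]
    _ = (A - 1).det := h2
  rw [hd] at hdet
  have hz : (A - 1).det = 0 := by linarith
  obtain ⟨v, hv, hv2⟩ := Matrix.exists_mulVec_eq_zero_iff.mpr hz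
  refine ⟨v, hv, ?_⟩
  rw [Matrix.sub_mulVec, Matrix.one_mulVec] at hv2
  have := sub_eq_zero.mp hv2
  exact this

lemma dot_mulVec_orth (A : Matrix (Fin 4) (Fin 4) ℝ) (hO : Aᵀ * A = 1)
    (x y : Fin 4 → ℝ) : A.mulVec x ⬝ᵥ A.mulVec y = x ⬝ᵥ y := by
  rw [Matrix.dotProduct_mulVec]
  have : Matrix.vecMul (A.mulVec x) A = x := by
    rw [← Matrix.vecMul_transpose] at *
    rw [Matrix.vecMul_vecMul, hO]
    · exact Matrix.vecMul_one x
  rw [this]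

/-- orthogonal A in dim 4 with det 1 fixing a unit vector o fixes some nonzero w ⊥ o -/
lemma fixed_perp (A : Matrix (Fin 4) (Fin 4) ℝ) (hO : Aᵀ * A = 1) (hd : A.det = 1)
    (o : Fin 4 → ℝ) (ho : o ⬝ᵥ o = 1) (hAo : A.mulVec o = o) :
    ∃ w : Fin 4 → ℝ, w ≠ 0 ∧ o ⬝ᵥ w = 0 ∧ A.mulVec w = w := by
  set C : Matrix (Fin 4) (Fin 4) ℝ := Matrix.vecMulVec o o with hC
  have hCsq : C * C = C := by
    ext i j
    rw [Matrix.mul_apply]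
    simp only [hC, Matrix.vecMulVec_apply]
    have : ∑ k, o i * o k * (o k * o j) = (o i * o j) * ∑ k, o k * o k := by
      rw [Finset.mul_sum]; apply Finset.sum_congr rfl; intro k _; ring
    rw [this]
    rw [show (∑ k, o k * o k) = o ⬝ᵥ o from rfl, ho, mul_one]
  have hCT : Cᵀ = C := by
    ext i j; simp only [hC, Matrix.transpose_apply, Matrix.vecMulVec_apply]; ring
  set R : Matrix (Fin 4) (Fin 4) ℝ := 1 - (2:ℝ) • C with hR
  have hRT : Rᵀ = R := by rw [hR, Matrix.transpose_sub, Matrix.transpose_one, Matrix.transpose_smul, hCT]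
  have hRR : R * R = 1 := by
    rw [hR]
    simp only [Matrix.sub_mul, Matrix.mul_sub, Matrix.smul_mul, Matrix.mul_smul,
      Matrix.one_mul, Matrix.mul_one, smul_smul]
    rw [hCsq]
    ext i j
    simp only [Matrix.sub_apply, Matrix.smul_apply, Matrix.one_apply, smul_eq_mul]
    ring
  have hdR : R.det = -1 := by
    have : R = 1 + Matrix.replicateCol Unit (-(2:ℝ) • o) * Matrix.replicateRow Unit o := by
      rw [← Matrix.vecMulVec_eq, hR]
      ext i j
      simp only [hC, Matrix.sub_apply, Matrix.add_apply, Matrix.smul_apply,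
        Matrix.vecMulVec_apply, Pi.smul_apply, smul_eq_mul]
      ring
    rw [this, Matrix.det_one_add_replicateCol_mul_replicateRow]
    simp only [dotProduct, Pi.smul_apply, smul_eq_mul]
    have : ∑ i, o i * (-2 * o i) = -2 * ∑ i, o i * o i := by
      rw [Finset.mul_sum]; apply Finset.sum_congr rfl; intro k _; ring
    rw [this, show (∑ i, o i * o i) = o ⬝ᵥ o from rfl, ho]; norm_num
  set N := A * R with hN
  have hNO : Nᵀ * N = 1 := by
    rw [hN, Matrix.transpose_mul, hRT]
    calc R * Aᵀ * (A * R) = R * (Aᵀ * A) * R := by rw [Matrix.mul_assoc, Matrix.mul_assoc, Matrix.mul_assoc]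
    _ = R * R := by rw [hO, Matrix.mul_one]
    _ = 1 := hRR
  have hNd : N.det = -1 := by rw [hN, Matrix.det_mul, hd, hdR]; norm_num
  obtain ⟨w, hw0, hwfix⟩ := fixed_of_det_neg_one N hNO hNd
  have hCw : C.mulVec w = (o ⬝ᵥ w) • o := by
    funext i
    simp only [hC, Matrix.mulVec, dotProduct, Matrix.vecMulVec_apply, Pi.smul_apply,
      smul_eq_mul]
    have e : ∀ k ∈ Finset.univ, o i * o k * w k = o i * (o k * w k) := fun k _ => by ring
    rw [Finset.sum_congr rfl e, ← Finset.mul_sum]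
    ring
  have hRw : R.mulVec w = w - (2 * (o ⬝ᵥ w)) • o := by
    rw [hR, Matrix.sub_mulVec, Matrix.one_mulVec, Matrix.smul_mulVec, hCw, smul_smul]
  have hAeq : A.mulVec w - (2 * (o ⬝ᵥ w)) • o = w := by
    have : N.mulVec w = A.mulVec (R.mulVec w) := by rw [hN, ← Matrix.mulVec_mulVec]
    rw [this, hRw] at hwfix
    rw [Matrix.mulVec_sub] at hwfix  -- A (w - c o) = A w - A (c o)
    rw [Matrix.mulVec_smul, hAo] at hwfix
    exact hwfix
  have hperp : o ⬝ᵥ w = 0 := by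
    have hdot := congrArg (fun v => o ⬝ᵥ v) hAeq
    simp only [dotProduct_sub, dotProduct_smul, smul_eq_mul] at hdot
    have h1 : o ⬝ᵥ A.mulVec w = o ⬝ᵥ w := by
      conv_lhs => rw [← hAo]
      rw [dot_mulVec_orth A hO]
    rw [h1, ho] at hdot
    linarith [hdot]
  refine ⟨w, hw0, hperp, ?_⟩
  rw [hperp] at hAeq
  simpa using hAeq


lemma Ms_cont : Continuous fun s => Ms g s := by
  apply continuous_matrix
  intro i j
  have h1 : Continuous fun s : ℝ => ((bp j : Sph), s) := continuous_const.prodMk continuous_id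
  have h2 : Continuous fun s : ℝ => (g ((bp j : Sph), s)).1 :=
    continuous_fst.comp (g.continuous.comp h1)
  have h3 : Continuous fun s : ℝ => ((g ((bp j : Sph), s)).1 : E4) :=
    continuous_subtype_val.comp h2
  exact (PiLp.continuous_apply 2 _ i).comp h3

lemma Ms_det_pm (h2 : ∀ p : S3xR, (g p).2 = p.2) (s : ℝ) :
    (Ms g s).det = 1 ∨ (Ms g s).det = -1 := by
  have := Ms_orth g h2 s
  have hdet : (Ms g s).det * (Ms g s).det = 1 := by
    have := congrArg Matrix.det this
    rwa [Matrix.det_mul, Matrix.det_transpose, Matrix.det_one] at this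
  exact mul_self_eq_one_iff.mp hdet

lemma Ms_det_const (h2 : ∀ p : S3xR, (g p).2 = p.2) :
    (Ms g 1).det = (Ms g 0).det := by
  by_contra hne
  have hc : Continuous fun s => (Ms g s).det := (Ms_cont g).matrix_det
  have h0 := Ms_det_pm g h2 0
  have h1 := Ms_det_pm g h2 1
  have hmem : (0:ℝ) ∈ Set.uIcc ((Ms g 0).det) ((Ms g 1).det) := by
    rcases h0 with h0 | h0 <;> rcases h1 with h1 | h1 <;>
      first
      | (exfalso; rw [h0, h1] at hne; exact hne rfl)
      | (rw [Set.mem_uIcc, h0, h1]; norm_num)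
  obtain ⟨s, _, hs⟩ := intermediate_value_uIcc hc.continuousOn hmem
  simp only [] at hs
  rcases Ms_det_pm g h2 s with h | h <;> rw [hs] at h <;> norm_num at h

lemma fix_point (h2 : ∀ p : S3xR, (g p).2 = p.2) (s : ℝ) (u : E4) (hu : ‖u‖ = 1)
    (hfixu : (Ms g s).mulVec (fun i => u i) = fun i => u i) :
    g ((⟨u, by simp [mem_sphere_zero_iff_norm, hu]⟩ : Sph), s)
      = ((⟨u, by simp [mem_sphere_zero_iff_norm, hu]⟩ : Sph), s) := by
  set x : Sph := ⟨u, by simp [mem_sphere_zero_iff_norm, hu]⟩ with hx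
  have hag := Ms_agree g h2 s x
  have hcoord : (fun i => (fs g s x : E4) i) = fun i => u i := by
    rw [← hag]; exact hfixu
  have hfs : fs g s x = x := by
    apply Subtype.ext
    apply PiLp.ext; intro i
    exact congrFun hcoord i
  rw [fs_spec g h2 s x, hfs]

set_option maxHeartbeats 2000000 in
theorem rigid_false (h2 : ∀ p : S3xR, (g p).2 = p.2)
    (z : S3xR) (hz2 : z.2 = 0) (hgz : g z = z)
    (hfix : ∀ x : S3xR, g x = x → x.2 = 0 ∧
      ∃ ε > 0, ∀ y : S3xR, g y = y → y ≠ x → ε ≤ dist x y) :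
    False := by
  rcases Ms_det_pm g h2 0 with hd0 | hd0
  · -- det = 1 : find a circle of fixed points at level 0 near z
    obtain ⟨-, ε₀, hε₀, hisoz⟩ := hfix z hgz
    set oe : E4 := (z.1 : E4) with hoe
    have honorm : ‖oe‖ = 1 := sph_norm z.1
    have hoo : (fun i => oe i) ⬝ᵥ (fun i => oe i) = 1 := by
      have : (inner ℝ oe oe : ℝ) = 1 := by rw [real_inner_self_eq_norm_sq, honorm]; norm_num
      rw [← this, inner_eq_sum]; rfl
    have hz1fix : fs g 0 z.1 = z.1 := by
      have hz' : ((z.1, 0) : S3xR) = z := Prod.ext rfl hz2.symm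
      have := fs_spec g h2 0 z.1
      rw [hz', hgz] at this
      have := congrArg Prod.fst this
      exact this.symm
    have hAo : (Ms g 0).mulVec (fun i => oe i) = fun i => oe i := by
      have hag := Ms_agree g h2 0 z.1
      rw [hz1fix] at hag
      exact hag
    obtain ⟨w, hw0, hwperp, hwfix⟩ :=
      fixed_perp (Ms g 0) (Ms_orth g h2 0) hd0 (fun i => oe i) hoo hAo
    set wE : E4 := WithLp.toLp 2 w with hwE
    have hwE0 : wE ≠ 0 := fun h => hw0 (congrArg WithLp.ofLp h)
    set c : ℝ := ‖wE‖ with hc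
    have hcpos : 0 < c := norm_pos_iff.mpr hwE0
    set wh : E4 := c⁻¹ • wE with hwh
    have hwhnorm : ‖wh‖ = 1 := by
      rw [hwh, norm_smul, norm_inv, norm_norm, ← hc, inv_mul_cancel₀ (ne_of_gt hcpos)]
    have hwhperp : (inner ℝ oe wh : ℝ) = 0 := by
      rw [hwh, real_inner_smul_right]
      have : (inner ℝ oe wE : ℝ) = 0 := by
        rw [inner_eq_sum]
        exact hwperp
      rw [this, mul_zero]
    have hwhfix : (Ms g 0).mulVec (fun i => wh i) = fun i => wh i := by
      have : (fun i => wh i) = c⁻¹ • w := rfl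
      rw [this, Matrix.mulVec_smul, hwfix]
    set t : ℝ := min (ε₀ / 4) (1 / 2) with htdef
    have htpos : 0 < t := lt_min (by linarith) (by norm_num)
    have hthalf : t ≤ 1 / 2 := min_le_right _ _
    have htε : t ≤ ε₀ / 4 := min_le_left _ _
    have ht1 : t ^ 2 ≤ 1 := by nlinarith
    set a : ℝ := Real.sqrt (1 - t ^ 2) with ha
    have ha0 : 0 ≤ a := Real.sqrt_nonneg _
    have ha1 : a ≤ 1 := Real.sqrt_le_one.mpr (by nlinarith [sq_nonneg t])
    have hasq : a ^ 2 = 1 - t ^ 2 := Real.sq_sqrt (by linarith)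
    have halow : 1 - t ^ 2 ≤ a := by
      have h1 : Real.sqrt ((1 - t ^ 2) ^ 2) ≤ Real.sqrt (1 - t ^ 2) := by
        apply Real.sqrt_le_sqrt; nlinarith
      rwa [Real.sqrt_sq (by linarith)] at h1
    set u : E4 := a • oe + t • wh with hudef
    have hinner_cross : (inner ℝ (a • oe) (t • wh) : ℝ) = 0 := by
      rw [real_inner_smul_left, real_inner_smul_right, hwhperp]; ring
    have hunorm : ‖u‖ = 1 := by
      have hsq : ‖u‖ ^ 2 = 1 := by
        rw [hudef, norm_add_sq_real, hinner_cross, norm_smul, norm_smul, honorm, hwhnorm]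
        rw [Real.norm_eq_abs, Real.norm_eq_abs, abs_of_nonneg ha0, abs_of_nonneg (le_of_lt htpos)]
        ring_nf
        nlinarith [hasq]
      have h1 : (‖u‖ - 1) * (‖u‖ + 1) = 0 := by ring_nf; linarith
      rcases mul_eq_zero.mp h1 with h | h
      · linarith
      · have := norm_nonneg u; linarith
    have hufix : (Ms g 0).mulVec (fun i => u i) = fun i => u i := by
      have he : (fun i => u i) = a • (fun i => oe i) + t • (fun i => wh i) := rfl
      rw [he, Matrix.mulVec_add, Matrix.mulVec_smul, Matrix.mulVec_smul, hAo, hwhfix]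
    have hgfix := fix_point g h2 0 u hunorm hufix
    have hune : u ≠ oe := by
      intro h
      have h1 : (inner ℝ u wh : ℝ) = t := by
        rw [hudef, inner_add_left, real_inner_smul_left, real_inner_smul_left,
          hwhperp, real_inner_self_eq_norm_sq, hwhnorm]
        ring
      rw [h] at h1
      rw [hwhperp] at h1
      linarith
    set y : S3xR := ((⟨u, by simp [mem_sphere_zero_iff_norm, hunorm]⟩ : Sph), 0) with hy
    have hyne : y ≠ z := by
      intro h
      have h1 := congrArg Prod.fst h
      have h2' : (y.1 : E4) = (z.1 : E4) := congrArg _ h1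
      exact hune h2'
    have hdist : dist z y ≤ 3 / 2 * t := by
      have h1 : dist z y = ‖oe - u‖ := by
        rw [Prod.dist_eq]
        have hd2 : dist z.2 y.2 = 0 := by rw [hz2, hy]; simp
        rw [hd2, max_eq_left dist_nonneg, Subtype.dist_eq, dist_eq_norm]
      have h2' : oe - u = (1 - a) • oe - t • wh := by
        rw [hudef]; module
      have h3 : ‖oe - u‖ ≤ (1 - a) + t := by
        rw [h2']
        calc ‖(1 - a) • oe - t • wh‖ ≤ ‖(1 - a) • oe‖ + ‖t • wh‖ := norm_sub_le _ _
        _ = (1 - a) + t := by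
            rw [norm_smul, norm_smul, honorm, hwhnorm, Real.norm_eq_abs, Real.norm_eq_abs,
              abs_of_nonneg (by linarith), abs_of_nonneg (le_of_lt htpos)]; ring
      have h4 : 1 - a ≤ t ^ 2 := by linarith
      have h5 : t ^ 2 ≤ t / 2 := by nlinarith
      rw [h1]; linarith
    have := hisoz y hgfix hyne
    have : ε₀ ≤ 3 / 2 * t := le_trans this hdist
    linarith
  · -- det = -1 : fixed point at level 1
    have hd1 : (Ms g 1).det = -1 := by rw [Ms_det_const g h2, hd0]
    obtain ⟨v, hv0, hvfix⟩ := fixed_of_det_neg_one (Ms g 1) (Ms_orth g h2 1) hd1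
    set vE : E4 := WithLp.toLp 2 v with hvE
    have hvE0 : vE ≠ 0 := fun h => hv0 (congrArg WithLp.ofLp h)
    set c : ℝ := ‖vE‖ with hc
    have hcpos : 0 < c := norm_pos_iff.mpr hvE0
    set u : E4 := c⁻¹ • vE with hu
    have hunorm : ‖u‖ = 1 := by
      rw [hu, norm_smul, norm_inv, norm_norm, ← hc, inv_mul_cancel₀ (ne_of_gt hcpos)]
    have hufix : (Ms g 1).mulVec (fun i => u i) = fun i => u i := by
      have : (fun i => u i) = c⁻¹ • v := rfl
      rw [this, Matrix.mulVec_smul, hvfix]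
    have hgfix := fix_point g h2 1 u hunorm hufix
    have := (hfix _ hgfix).1
    norm_num at this

lemma sph_dist_le (x y : Sph) : dist x y ≤ 2 := by
  have hx : dist (x : E4) 0 = 1 := x.2
  have hy : dist (0 : E4) (y : E4) = 1 := by rw [dist_comm]; exact y.2
  calc dist x y = dist (x : E4) (y : E4) := Subtype.dist_eq x y
  _ ≤ dist (x : E4) 0 + dist (0 : E4) (y : E4) := dist_triangle _ _ _
  _ = 2 := by rw [hx, hy]; norm_num

lemma far (g : S3xR ≃ᵢ S3xR) (p : S3xR) (t : ℝ) (h : p.2 + 3 ≤ t) :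
    |(g (bp 0, t)).2 - (g p).2| = t - p.2 := by
  have h2 : (2:ℝ) ≤ t - p.2 := by linarith
  have h1 : dist ((bp 0, t) : S3xR) p = t - p.2 := by
    rw [Prod.dist_eq]
    have hd : dist ((bp 0, t) : S3xR).2 p.2 = t - p.2 := by
      rw [Real.dist_eq, abs_of_nonneg (by linarith)]
    rw [hd]
    exact max_eq_right (le_trans (sph_dist_le _ _) h2)
  have h3 : dist (g (bp 0, t)) (g p) = t - p.2 := by rw [g.dist_eq]; exact h1
  rw [Prod.dist_eq] at h3
  rcases max_eq_iff.mp h3 with ⟨ha, hb⟩ | ⟨hb, _⟩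
  · exfalso
    have := sph_dist_le (g (bp 0, t)).1 (g p).1
    rw [ha] at this; linarith
  · rw [Real.dist_eq] at hb; exact hb

theorem vert_split (g : S3xR ≃ᵢ S3xR) :
    ∃ ε a : ℝ, (ε = 1 ∨ ε = -1) ∧ ∀ p : S3xR, (g p).2 = ε * p.2 + a := by
  set a0 := (g (bp 0, 0)).2 with ha0
  set b0 := (g (bp 0, 1)).2 with hb0
  set ε := b0 - a0 with hε
  have main : ∀ p : S3xR, (g p).2 = ε * p.2 + a0 ∧ (ε = 1 ∨ ε = -1) := by
    intro p
    set t := |p.2| + |(g p).2| + |a0| + |b0| + 100 with ht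
    have habs : ∀ r : ℝ, -(|r|) ≤ r ∧ r ≤ |r| := fun r => ⟨neg_abs_le r, le_abs_self r⟩
    have h1 := habs p.2; have h2 := habs (g p).2; have h3 := habs a0; have h4 := habs b0
    have hu : |(g (bp 0, t)).2 - (g p).2| = t - p.2 := far g p t (by simp only [ht]; linarith)
    have hv : |(g (bp 0, t)).2 - a0| = t - 0 := far g (bp 0, 0) t (by simp only [ht]; linarith)
    have hw : |(g (bp 0, t)).2 - b0| = t - 1 := far g (bp 0, 1) t (by simp only [ht]; linarith)
    set h := (g (bp 0, t)).2 with hh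
    have h5 := habs (h - (g p).2); rw [hu] at h5
    have h6 := habs (h - a0); rw [hv] at h6
    have h7 := habs (h - b0); rw [hw] at h7
    -- determine the common sign of (h - a0)
    rcases le_or_gt (h - a0) 0 with hneg | hpos
    · -- negative sign: h - a0 = -(t - 0) etc.
      have e6 : h - a0 = -(t - 0) := by
        rcases abs_eq (by linarith : (0:ℝ) ≤ t - 0) |>.mp hv with h' | h'
        · linarith
        · linarith
      have e5 : h - (g p).2 = -(t - p.2) := by
        rcases abs_eq (by linarith : (0:ℝ) ≤ t - p.2) |>.mp hu with h' | h'
        · exfalso; linarith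
        · linarith
      have e7 : h - b0 = -(t - 1) := by
        rcases abs_eq (by linarith : (0:ℝ) ≤ t - 1) |>.mp hw with h' | h'
        · exfalso; linarith
        · linarith
      have hεv : ε = -1 := by rw [hε]; linarith
      refine ⟨?_, Or.inr hεv⟩
      rw [hεv]; linarith
    · have e6 : h - a0 = t - 0 := by
        rcases abs_eq (by linarith : (0:ℝ) ≤ t - 0) |>.mp hv with h' | h'
        · linarith
        · linarith
      have e5 : h - (g p).2 = t - p.2 := by
        rcases abs_eq (by linarith : (0:ℝ) ≤ t - p.2) |>.mp hu with h' | h'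
        · linarith
        · exfalso; linarith
      have e7 : h - b0 = t - 1 := by
        rcases abs_eq (by linarith : (0:ℝ) ≤ t - 1) |>.mp hw with h' | h'
        · linarith
        · exfalso; linarith
      have hεv : ε = 1 := by rw [hε]; linarith
      refine ⟨?_, Or.inl hεv⟩
      rw [hεv]; linarith
  exact ⟨ε, a0, (main (bp 0, 0)).2, fun p => (main p).1⟩


end StabAux

/-- Let `Γ` be a finite group of isometries of `S³ × ℝ` such that all fixed points of
nontrivial elements are isolated and lie in `S³ × {0}`. If `γ ∈ Γ` fixes a point
`z = (o, 0)`, then the stabilizer of `z` in `Γ` has order at most `2`, and any nontrivial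
element of the stabilizer acts on the `ℝ` factor by `s ↦ -s`. -/
theorem stabilizer_order_le_two
    (Γ : Subgroup (S3xR ≃ᵢ S3xR)) (hΓ : Finite Γ)
    (hiso : ∀ g ∈ Γ, g ≠ 1 → ∀ x : S3xR, g x = x →
      x.2 = 0 ∧ ∃ ε > 0, ∀ y : S3xR, g y = y → y ≠ x → ε ≤ dist x y)
    (γ : S3xR ≃ᵢ S3xR) (hγ : γ ∈ Γ)
    (z : S3xR) (hz : z.2 = 0) (hγz : γ z = z) :
    Nat.card {g : Γ // (g : S3xR ≃ᵢ S3xR) z = z} ≤ 2 ∧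
      ∀ g : Γ, (g : S3xR ≃ᵢ S3xR) z = z → (g : S3xR ≃ᵢ S3xR) ≠ 1 →
        ∀ p : S3xR, ((g : S3xR ≃ᵢ S3xR) p).2 = -p.2 := by
  classical
  have part2 : ∀ g : S3xR ≃ᵢ S3xR, g ∈ Γ → g z = z → g ≠ 1 →
      ∀ p : S3xR, (g p).2 = -p.2 := by
    intro g hg hgz hgne p
    obtain ⟨ε, a, hεpm, hsplit⟩ := StabAux.vert_split g
    rcases hεpm with hε1 | hε1
    · exfalso
      have ha : a = 0 := by
        have h' := hsplit z; rw [hgz, hz, hε1] at h'; linarith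
      have h2 : ∀ q : S3xR, (g q).2 = q.2 := by
        intro q; rw [hsplit q, hε1, ha]; ring
      exact StabAux.rigid_false g h2 z hz hgz (hiso g hg hgne)
    · have ha : a = 0 := by
        have h' := hsplit z; rw [hgz, hz, hε1] at h'; linarith
      rw [hsplit p, hε1, ha]; ring
  have hmul : ∀ g h : S3xR ≃ᵢ S3xR, g ∈ Γ → h ∈ Γ → g z = z → h z = z →
      g ≠ 1 → h ≠ 1 → g * h = 1 := by
    intro g h hg hh hgz hhz hgne hhne
    by_contra hne
    have hmem : g * h ∈ Γ := mul_mem hg hh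
    have hfixz : (g * h) z = z := by
      show g (h z) = z
      rw [hhz, hgz]
    have h2 : ∀ p : S3xR, ((g * h) p).2 = p.2 := by
      intro p
      show (g (h p)).2 = p.2
      rw [part2 g hg hgz hgne (h p), part2 h hh hhz hhne p]; ring
    exact StabAux.rigid_false (g * h) h2 z hz hfixz (hiso _ hmem hne)
  have huniq : ∀ g h : S3xR ≃ᵢ S3xR, g ∈ Γ → h ∈ Γ → g z = z → h z = z →
      g ≠ 1 → h ≠ 1 → g = h := by
    intro g h hg hh hgz hhz hgne hhne
    have h1 := hmul g h hg hh hgz hhz hgne hhne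
    have h2 := hmul h h hh hh hhz hhz hhne hhne
    have hg' : g = h⁻¹ := eq_inv_of_mul_eq_one_left h1
    have hh' : h⁻¹ = h := inv_eq_of_mul_eq_one_left h2
    rw [hg', hh']
  constructor
  · have hinj : Function.Injective
        (fun x : {g : Γ // (g : S3xR ≃ᵢ S3xR) z = z} =>
          (decide ((x.1 : S3xR ≃ᵢ S3xR) = 1) : Bool)) := by
      intro x y hxy
      by_cases hx1 : (x.1 : S3xR ≃ᵢ S3xR) = 1
      · by_cases hy1 : (y.1 : S3xR ≃ᵢ S3xR) = 1
        · exact Subtype.ext (Subtype.ext (by rw [hx1, hy1]))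
        · simp [hx1, hy1] at hxy
      · by_cases hy1 : (y.1 : S3xR ≃ᵢ S3xR) = 1
        · simp [hx1, hy1] at hxy
        · exact Subtype.ext (Subtype.ext
            (huniq _ _ x.1.2 y.1.2 x.2 y.2 hx1 hy1))
    have hle := Nat.card_le_card_of_injective _ hinj
    simpa using hle
  · intro g hgz hgne p
    exact part2 (g : S3xR ≃ᵢ S3xR) g.2 hgz hgne p
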